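/- arXiv:1708.01690 — 5 statements merged into one kernel-verified Lean document; each statement's English description precedes it below -/
import Mathlib

section
/- Let X be an n×n real symmetric positive semidefinite matrix with all diagonal entries equal to 1, let ε > 0, q ∈ [0,1], and let α be a positive real number with α ≤ ε/(4(1+ε^q)). Define Y = X − 4αε(1+ε^q)·(X² + εI)^{−2}·X, and let Y′ be the matrix obtained from Y by replacing every diagonal entry of Y with 1 (keeping all off-diagonal entries of Y). Then Y′ is symmetric positive semidefinite. -/
open Matrix

lemma psd_smul_aux {n : ℕ} {A : Matrix (Fin n) (Fin n) ℝ} (hA : A.PosSemidef)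
    {c : ℝ} (hc : 0 ≤ c) : (c • A).PosSemidef := by
  refine .of_dotProduct_mulVec_nonneg (by rw [Matrix.IsHermitian, conjTranspose_smul, hA.isHermitian.eq, star_trivial]) fun x => ?_
  rw [smul_mulVec, dotProduct_smul]
  exact mul_nonneg hc (hA.dotProduct_mulVec_nonneg x)

lemma psd_diag_nonneg {n : ℕ} {A : Matrix (Fin n) (Fin n) ℝ} (hA : A.PosSemidef)
    (i : Fin n) : 0 ≤ A i i := by
  simpa using hA.dotProduct_mulVec_nonneg (Pi.single i 1)

open scoped MatrixOrder in
lemma psd_sqrt_aux {n : ℕ} {X : Matrix (Fin n) (Fin n) ℝ} (hX : X.PosSemidef) :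
    ∃ S : Matrix (Fin n) (Fin n) ℝ, S.IsHermitian ∧ S * S = X :=
  ⟨CFC.sqrt X, (CFC.sqrt_nonneg X).posSemidef.isHermitian, CFC.sqrt_mul_sqrt_self X hX.nonneg⟩

/-- Let `X` be an `n × n` real symmetric positive semidefinite matrix with
unit diagonal, `ε > 0`, `q ∈ [0,1]`, and `0 < α ≤ ε / (4(1 + ε^q))`.  Let
`Y = X - 4αε(1+ε^q) • (X² + εI)⁻² * X` and let `Y'` be obtained from `Y` by replacing every
diagonal entry with `1`.  Then `Y'` is positive semidefinite. -/
theorem singular_value_relaxation_step_unit_diagonal_psd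
    (n : ℕ) (X : Matrix (Fin n) (Fin n) ℝ) (hX : X.PosSemidef)
    (hdiag : ∀ i, X i i = 1)
    (ε q α : ℝ) (hε : 0 < ε) (hq0 : 0 ≤ q) (hq1 : q ≤ 1)
    (hα : 0 < α) (hαle : α ≤ ε / (4 * (1 + ε ^ q)))
    (Y : Matrix (Fin n) (Fin n) ℝ)
    (hY : Y = X - (4 * α * ε * (1 + ε ^ q)) •
      (((X ^ 2 + ε • (1 : Matrix (Fin n) (Fin n) ℝ))⁻¹) ^ 2 * X))
    (Y' : Matrix (Fin n) (Fin n) ℝ)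
    (hY' : Y' = Matrix.of fun i j => if i = j then (1 : ℝ) else Y i j) :
    Y'.PosSemidef := by
  set t : ℝ := 1 + ε ^ q with ht_def
  have htpos : 0 < t := by positivity
  set c : ℝ := 4 * α * ε * t with hc_def
  have hc0 : 0 < c := by positivity
  have hcε : c ≤ ε ^ 2 := by
    have h1 : α * (4 * t) ≤ ε := by
      rw [div_eq_mul_inv] at hαle
      calc α * (4 * t) ≤ (ε * (4 * t)⁻¹) * (4 * t) := by
            apply mul_le_mul_of_nonneg_right hαle (by positivity)
        _ = ε := by field_simp
    calc c = (α * (4 * t)) * ε := by ring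
      _ ≤ ε * ε := mul_le_mul_of_nonneg_right h1 hε.le
      _ = ε ^ 2 := (sq ε).symm
  set M : Matrix (Fin n) (Fin n) ℝ := X ^ 2 + ε • (1 : Matrix (Fin n) (Fin n) ℝ) with hM_def
  have hMpd : M.PosDef := by
    refine .of_dotProduct_mulVec_pos ((hX.pow 2).add (psd_smul_aux .one hε.le)).isHermitian fun x hx => ?_
    have h1 : 0 < (star x) ⬝ᵥ ((ε • (1 : Matrix (Fin n) (Fin n) ℝ)) *ᵥ x) := by
      rw [smul_mulVec, one_mulVec, dotProduct_smul]
      have : (0:ℝ) < star x ⬝ᵥ x := by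
        simpa using dotProduct_star_self_pos_iff.mpr hx
      · simpa [dotProduct_comm] using mul_pos hε this
    have h2 : 0 ≤ (star x) ⬝ᵥ ((X ^ 2) *ᵥ x) := (hX.pow 2).dotProduct_mulVec_nonneg x
    rw [hM_def, add_mulVec, dotProduct_add]
    exact add_pos_of_nonneg_of_pos h2 h1
  have hMunit : IsUnit M.det := isUnit_iff_ne_zero.mpr (ne_of_gt hMpd.det_pos)
  set N : Matrix (Fin n) (Fin n) ℝ := M⁻¹ with hN_def
  have hMN : M * N = 1 := mul_nonsing_inv M hMunit
  have hNM : N * M = 1 := nonsing_inv_mul M hMunit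
  have hNherm : N.IsHermitian := hMpd.posSemidef.inv.isHermitian
  -- X commutes with M and N
  have hXM : X * M = M * X := by
    simp only [hM_def, mul_add, add_mul]
    rw [← pow_succ, ← pow_succ']
    congr 1
    rw [mul_smul_comm, smul_mul_assoc, mul_one, one_mul]
  have hXN : X * N = N * X := by
    have : N * (X * M) * N = N * (M * X) * N := by rw [hXM]
    calc X * N = N * M * X * N := by rw [hNM, one_mul]
      _ = N * (M * X) * N := by noncomm_ring
      _ = N * (X * M) * N := by rw [hXM]
      _ = N * X * (M * N) := by noncomm_ring
      _ = N * X := by rw [hMN, mul_one]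
  -- square root of X
  obtain ⟨S, hSherm, hSS⟩ := psd_sqrt_aux hX
  have hSX : S * X = X * S := by rw [← hSS]; noncomm_ring
  have hSM : S * M = M * S := by
    simp only [hM_def, mul_add, add_mul, pow_two]
    rw [mul_smul_comm, smul_mul_assoc, mul_one, one_mul]
    congr 1
    rw [← mul_assoc, hSX, mul_assoc, hSX, ← mul_assoc]
  have hSN : S * N = N * S := by
    have h1 : N * (S * M) * N = N * (M * S) * N := by rw [hSM]
    calc S * N = N * M * (S * N) := by rw [hNM, one_mul]
      _ = N * (M * S) * N := by simp only [mul_assoc]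
      _ = N * (S * M) * N := h1.symm
      _ = N * S * (M * N) := by simp only [mul_assoc]
      _ = N * S := by rw [hMN, mul_one]
  -- the matrix N^2 * X is PSD
  have hNXN : (N ^ 2 * X).PosSemidef := by
    have h : N ^ 2 * X = Nᴴ * X * N := by
      rw [hNherm.eq, pow_two]
      calc N * N * X = N * (N * X) := by rw [mul_assoc]
        _ = N * (X * N) := by rw [hXN]
        _ = N * X * N := by rw [mul_assoc]
    rw [h]
    exact hX.conjTranspose_mul_mul_same N
  -- M^2 - c • 1 is PSD
  have hMsq : M ^ 2 = X ^ 4 + (2 * ε) • X ^ 2 + (ε ^ 2) • (1 : Matrix (Fin n) (Fin n) ℝ) := by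
    have e1 : X ^ 2 * X ^ 2 = X ^ 4 := by rw [← pow_add]
    simp only [hM_def]
    rw [pow_two, add_mul, mul_add, mul_add]
    simp only [mul_smul_comm, smul_mul_assoc, mul_one, one_mul, smul_smul, e1]
    module
  have hP : (M ^ 2 - c • (1 : Matrix (Fin n) (Fin n) ℝ)).PosSemidef := by
    have heq : M ^ 2 - c • (1 : Matrix (Fin n) (Fin n) ℝ) =
        X ^ 4 + (2 * ε) • X ^ 2 + (ε ^ 2 - c) • (1 : Matrix (Fin n) (Fin n) ℝ) := by
      rw [hMsq, sub_smul]
      abel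
    rw [heq]
    exact ((hX.pow 4).add (psd_smul_aux (hX.pow 2) (by positivity))).add
      (psd_smul_aux .one (by linarith))
  -- 1 - c • N^2 is PSD
  have hQ : ((1 : Matrix (Fin n) (Fin n) ℝ) - c • N ^ 2).PosSemidef := by
    have h : (1 : Matrix (Fin n) (Fin n) ℝ) - c • N ^ 2 =
        Nᴴ * (M ^ 2 - c • (1 : Matrix (Fin n) (Fin n) ℝ)) * N := by
      rw [hNherm.eq, mul_sub, sub_mul]
      congr 1
      · rw [pow_two]
        calc (1 : Matrix (Fin n) (Fin n) ℝ) = (N * M) * (M * N) := by rw [hMN, hNM, one_mul]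
          _ = N * (M * M) * N := by simp only [mul_assoc]
      · rw [mul_smul_comm, smul_mul_assoc, mul_one, pow_two]
    rw [h]
    exact hP.conjTranspose_mul_mul_same N
  -- Y is PSD
  have key : S * (N * N) * S = N * N * X := by
    calc S * (N * N) * S = S * N * (N * S) := by simp only [mul_assoc]
      _ = N * S * (N * S) := by rw [hSN]
      _ = N * S * (S * N) := by rw [hSN]
      _ = N * (S * (S * N)) := by rw [mul_assoc]
      _ = N * (S * S * N) := by rw [← mul_assoc S S N]
      _ = N * (X * N) := by rw [hSS]
      _ = N * (N * X) := by rw [hXN]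
      _ = N * N * X := by rw [mul_assoc]
  have hYeq : Y = Sᴴ * ((1 : Matrix (Fin n) (Fin n) ℝ) - c • N ^ 2) * S := by
    have h2 : Sᴴ * ((1 : Matrix (Fin n) (Fin n) ℝ) - c • N ^ 2) * S = X - c • (N ^ 2 * X) := by
      rw [hSherm.eq, mul_sub, sub_mul, mul_one, hSS, mul_smul_comm, smul_mul_assoc, pow_two,
        key]
    rw [h2, hY]
  have hYpsd : Y.PosSemidef := by
    rw [hYeq]; exact hQ.conjTranspose_mul_mul_same S
  -- diagonal entries of Y are at most 1
  have hYdiag : ∀ i, Y i i ≤ 1 := by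
    intro i
    have h1 : Y i i = 1 - c * ((N ^ 2 * X) i i) := by
      rw [hY]
      simp [Matrix.sub_apply, Matrix.smul_apply, hdiag i, smul_eq_mul, hc_def]
    rw [h1]
    nlinarith [psd_diag_nonneg hNXN i, hc0]
  -- Y' = Y + diagonal correction
  have hY'eq : Y' = Y + Matrix.diagonal (fun i => 1 - Y i i) := by
    rw [hY']
    ext i j
    by_cases h : i = j
    · subst h; simp
    · simp [Matrix.diagonal_apply_ne _ h, h]
  rw [hY'eq]
  exact hYpsd.add (Matrix.posSemidef_diagonal_iff.mpr fun i => by linarith [hYdiag i])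
end

section
/- Let X be an n×n real symmetric positive semidefinite matrix with all diagonal entries equal to 1, let ε > 0, p ∈ (0,1], and let α be a positive real number with α ≤ ε^{(2−p)/2}/(2p). Define Y = X − 2αp·X·(X² + εI)^{(p−2)/2}, and let Y′ be the matrix obtained from Y by replacing every diagonal entry of Y with 1 (keeping all off-diagonal entries of Y). Then Y′ is symmetric positive semidefinite. -/
open Matrix
open Polynomial

/-- The real matrix power `A ^ r` of a real symmetric (Hermitian) matrix `A`, defined via the
spectral decomposition: `A ^ r = U * diagonal (λᵢ ^ r) * Uᵀ`, where `A = U * diagonal λ * Uᵀ`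
is the eigendecomposition of `A`. -/
noncomputable def Matrix.IsHermitian.rpow {n : ℕ} {A : Matrix (Fin n) (Fin n) ℝ}
    (hA : A.IsHermitian) (r : ℝ) : Matrix (Fin n) (Fin n) ℝ :=
  (hA.eigenvectorUnitary : Matrix (Fin n) (Fin n) ℝ) *
    Matrix.diagonal (fun i => hA.eigenvalues i ^ r) *
    star (hA.eigenvectorUnitary : Matrix (Fin n) (Fin n) ℝ)

theorem isHermitian_sq_add_smul_one {n : ℕ} {X : Matrix (Fin n) (Fin n) ℝ}
    (hX : X.IsHermitian) (ε : ℝ) :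
    (X ^ 2 + ε • (1 : Matrix (Fin n) (Fin n) ℝ)).IsHermitian :=
  (hX.pow 2).add (by simp [Matrix.IsHermitian, Matrix.conjTranspose_smul])


lemma pow_unitary_conj {n : ℕ} (V : Matrix (Fin n) (Fin n) ℝ)
    (hV1 : V * star V = 1) (hV2 : star V * V = 1)
    (d : Fin n → ℝ) (k : ℕ) :
    (V * Matrix.diagonal d * star V) ^ k
      = V * Matrix.diagonal (fun i => d i ^ k) * star V := by
  induction k with
  | zero => simp [hV1]
  | succ k ih =>
      rw [pow_succ, ih, show (fun i => d i ^ (k+1)) = fun i => d i ^ k * d i from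
        funext fun i => pow_succ (d i) k, ← Matrix.diagonal_mul_diagonal]
      simp only [mul_assoc]
      rw [show star V * (V * (Matrix.diagonal d * star V)) = Matrix.diagonal d * star V by
        rw [← mul_assoc, hV2, one_mul]]

lemma aeval_unitary_conj {n : ℕ} (V : Matrix (Fin n) (Fin n) ℝ)
    (hV1 : V * star V = 1) (hV2 : star V * V = 1)
    (d : Fin n → ℝ) (q : ℝ[X]) :
    Polynomial.aeval (V * Matrix.diagonal d * star V) q
      = V * Matrix.diagonal (fun i => q.eval (d i)) * star V := by
  induction q using Polynomial.induction_on' with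
  | add p q hp hq =>
      rw [map_add, hp, hq]
      simp only [eval_add]
      rw [show (Matrix.diagonal fun i => p.eval (d i) + q.eval (d i))
         = Matrix.diagonal (fun i => p.eval (d i)) + Matrix.diagonal (fun i => q.eval (d i)) from
           (Matrix.diagonal_add _ _).symm]
      rw [Matrix.mul_add, Matrix.add_mul]
  | monomial k c =>
      rw [aeval_monomial, pow_unitary_conj V hV1 hV2]
      simp only [eval_monomial]
      rw [show (Matrix.diagonal fun i => c * d i ^ k)
         = c • Matrix.diagonal (fun i => d i ^ k) by
           rw [← Matrix.diagonal_smul]; rfl]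
      rw [Algebra.algebraMap_eq_smul_one]
      simp [Matrix.smul_mul, Matrix.mul_smul]

/-- Let `X` be an `n × n` real symmetric positive semidefinite matrix with
unit diagonal, `ε > 0`, `p ∈ (0,1]`, and `0 < α ≤ ε^((2-p)/2) / (2p)`.  Let
`Y = X - 2αp • X * (X² + εI)^((p-2)/2)` and let `Y'` be obtained from `Y` by replacing every
diagonal entry with `1`.  Then `Y'` is positive semidefinite. -/
theorem schatten_relaxation_step_unit_diagonal_psd
    (n : ℕ) (X : Matrix (Fin n) (Fin n) ℝ) (hX : X.PosSemidef)
    (hdiag : ∀ i, X i i = 1)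
    (ε p α : ℝ) (hε : 0 < ε) (hp0 : 0 < p) (hp1 : p ≤ 1)
    (hα : 0 < α) (hαle : α ≤ ε ^ ((2 - p) / 2) / (2 * p))
    (Y : Matrix (Fin n) (Fin n) ℝ)
    (hY : Y = X - (2 * α * p) •
      (X * (isHermitian_sq_add_smul_one hX.1 ε).rpow ((p - 2) / 2)))
    (Y' : Matrix (Fin n) (Fin n) ℝ)
    (hY' : Y' = Matrix.of fun i j => if i = j then (1 : ℝ) else Y i j) :
    Y'.PosSemidef := by
  classical
  set r : ℝ := (p - 2) / 2 with hr
  set c : ℝ := 2 * α * p with hc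
  have hM : (X ^ 2 + ε • (1 : Matrix (Fin n) (Fin n) ℝ)).IsHermitian :=
    isHermitian_sq_add_smul_one hX.1 ε
  set M : Matrix (Fin n) (Fin n) ℝ := X ^ 2 + ε • (1 : Matrix (Fin n) (Fin n) ℝ) with hMdef
  set U : Matrix (Fin n) (Fin n) ℝ := (hM.eigenvectorUnitary : Matrix (Fin n) (Fin n) ℝ) with hU
  set V : Matrix (Fin n) (Fin n) ℝ := (hX.1.eigenvectorUnitary : Matrix (Fin n) (Fin n) ℝ) with hV
  set μ : Fin n → ℝ := hM.eigenvalues with hμ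
  set l : Fin n → ℝ := hX.1.eigenvalues with hl
  have hU1 : U * star U = 1 := Matrix.mem_unitaryGroup_iff.mp hM.eigenvectorUnitary.2
  have hU2 : star U * U = 1 := Matrix.mem_unitaryGroup_iff'.mp hM.eigenvectorUnitary.2
  have hV1 : V * star V = 1 := Matrix.mem_unitaryGroup_iff.mp hX.1.eigenvectorUnitary.2
  have hV2 : star V * V = 1 := Matrix.mem_unitaryGroup_iff'.mp hX.1.eigenvectorUnitary.2
  have hXspec : X = V * Matrix.diagonal l * star V := by
    have := hX.1.spectral_theorem
    simpa [RCLike.ofReal_real_eq_id, Function.comp] using this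
  have hMspecU : M = U * Matrix.diagonal μ * star U := by
    have := hM.spectral_theorem
    simpa [RCLike.ofReal_real_eq_id, Function.comp] using this
  have hMspecV : M = V * Matrix.diagonal (fun i => l i ^ 2 + ε) * star V := by
    rw [hMdef, hXspec, pow_unitary_conj V hV1 hV2]
    have h1 : ε • (1 : Matrix (Fin n) (Fin n) ℝ)
        = V * Matrix.diagonal (fun _ => ε) * star V := by
      rw [← Matrix.smul_one_eq_diagonal]
      rw [Matrix.mul_smul, Matrix.smul_mul, mul_one, hV1]
    rw [h1, show (Matrix.diagonal fun i => l i ^ 2 + ε)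
        = Matrix.diagonal (fun i => l i ^ 2) + Matrix.diagonal (fun _ => ε) from
        (Matrix.diagonal_add _ _).symm]
    rw [Matrix.mul_add, Matrix.add_mul]
  -- interpolation polynomial
  set s : Finset ℝ := Finset.image μ Finset.univ ∪
      Finset.image (fun i => l i ^ 2 + ε) Finset.univ with hs
  set q : ℝ[X] := Lagrange.interpolate s id (fun x => x ^ r) with hq
  have hinj : Set.InjOn id (s : Set ℝ) := fun a _ b _ h => h
  have hqev : ∀ x ∈ s, q.eval x = x ^ r := fun x hx => by
    rw [hq]; exact Lagrange.eval_interpolate_at_node (fun x => x ^ r) hinj hx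
  have hRspec : hM.rpow r = V * Matrix.diagonal (fun i => (l i ^ 2 + ε) ^ r) * star V := by
    have e1 : Polynomial.aeval M q = hM.rpow r := by
      conv_lhs => rw [hMspecU]
      rw [aeval_unitary_conj U hU1 hU2]
      unfold Matrix.IsHermitian.rpow
      rw [show (fun i => q.eval (μ i)) = fun i => μ i ^ r from funext fun i =>
        hqev (μ i) (Finset.mem_union_left _ (Finset.mem_image_of_mem _ (Finset.mem_univ i)))]
    have e2 : Polynomial.aeval M q
        = V * Matrix.diagonal (fun i => (l i ^ 2 + ε) ^ r) * star V := by
      conv_lhs => rw [hMspecV]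
      rw [aeval_unitary_conj V hV1 hV2]
      rw [show (fun i => q.eval (l i ^ 2 + ε)) = fun i => (l i ^ 2 + ε) ^ r from funext fun i =>
        hqev _ (Finset.mem_union_right _ (Finset.mem_image_of_mem _ (Finset.mem_univ i)))]
    rw [← e1, e2]
  -- spectral form of Y
  have hXR : X * hM.rpow r
      = V * Matrix.diagonal (fun i => l i * (l i ^ 2 + ε) ^ r) * star V := by
    rw [hXspec, hRspec]
    rw [show (Matrix.diagonal fun i => l i * (l i ^ 2 + ε) ^ r)
        = Matrix.diagonal l * Matrix.diagonal (fun i => (l i ^ 2 + ε) ^ r) from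
        (Matrix.diagonal_mul_diagonal _ _).symm]
    simp only [mul_assoc]
    rw [show star V * (V * (Matrix.diagonal (fun i => (l i ^ 2 + ε) ^ r) * star V))
        = Matrix.diagonal (fun i => (l i ^ 2 + ε) ^ r) * star V by
      rw [← mul_assoc, hV2, one_mul]]
  have hYspec : Y = V * Matrix.diagonal
      (fun i => l i * (1 - c * (l i ^ 2 + ε) ^ r)) * star V := by
    rw [hY, hXR, hXspec]
    rw [show (Matrix.diagonal fun i => l i * (1 - c * (l i ^ 2 + ε) ^ r))
        = Matrix.diagonal l - c • Matrix.diagonal (fun i => l i * (l i ^ 2 + ε) ^ r) by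
      ext i j
      rcases eq_or_ne i j with h | h
      · subst h
        simp only [Matrix.sub_apply, Matrix.smul_apply, Matrix.diagonal_apply_eq, smul_eq_mul]
        ring
      · simp [Matrix.diagonal_apply_ne _ h]]
    rw [Matrix.mul_sub, Matrix.sub_mul, Matrix.mul_smul, Matrix.smul_mul]
  -- eigenvalue bounds
  have hcpos : 0 < c := by positivity
  have hkey : ∀ i, c * (l i ^ 2 + ε) ^ r ≤ 1 := by
    intro i
    have hbase : ε ≤ l i ^ 2 + ε := by nlinarith [sq_nonneg (l i)]
    have h1 : (l i ^ 2 + ε) ^ r ≤ ε ^ r :=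
      Real.rpow_le_rpow_of_nonpos hε hbase (by rw [hr]; linarith)
    have h2 : c ≤ ε ^ ((2 - p) / 2) := by
      rw [hc]
      have := (le_div_iff₀ (by positivity : (0:ℝ) < 2 * p)).mp hαle
      linarith [this]
    calc c * (l i ^ 2 + ε) ^ r ≤ ε ^ ((2 - p) / 2) * ε ^ r :=
          mul_le_mul h2 h1 (Real.rpow_nonneg (by positivity) _) (Real.rpow_nonneg hε.le _)
      _ = ε ^ ((2 - p) / 2 + r) := (Real.rpow_add hε _ _).symm
      _ = 1 := by rw [hr, show (2 - p) / 2 + (p - 2) / 2 = 0 by ring, Real.rpow_zero]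
  have hYpsd : Y.PosSemidef := by
    rw [hYspec, show star V = Vᴴ from rfl]
    exact (Matrix.posSemidef_diagonal_iff.mpr fun i =>
      mul_nonneg (hX.eigenvalues_nonneg i) (by linarith [hkey i])).mul_mul_conjTranspose_same V
  have hXRpsd : (X * hM.rpow r).PosSemidef := by
    rw [hXR, show star V = Vᴴ from rfl]
    exact (Matrix.posSemidef_diagonal_iff.mpr fun i =>
      mul_nonneg (hX.eigenvalues_nonneg i)
        (Real.rpow_nonneg (by positivity) _)).mul_mul_conjTranspose_same V
  have hYdiag : ∀ i, Y i i ≤ 1 := by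
    intro i
    have hXRii : 0 ≤ (X * hM.rpow r) i i := by
      simpa using hXRpsd.dotProduct_mulVec_nonneg (Pi.single i 1)
    have : Y i i = 1 - c * (X * hM.rpow r) i i := by
      rw [hY]
      simp [Matrix.sub_apply, Matrix.smul_apply, hdiag i, hc]
    rw [this]
    nlinarith
  have hsplit : Y' = Y + Matrix.diagonal (fun i => 1 - Y i i) := by
    rw [hY']
    ext i j
    by_cases h : i = j
    · subst h; simp [Matrix.diagonal_apply_eq]
    · simp [h, Matrix.diagonal_apply_ne _ h]
  rw [hsplit]
  exact hYpsd.add (Matrix.posSemidef_diagonal_iff.mpr fun i => by linarith [hYdiag i])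
end

section
/- Let X be an n×n real symmetric positive semidefinite matrix, let ε > 0, C > 0, and let α be a positive real number with α ≤ ε²/(2C). Then the matrix X − 2αC·(X² + εI)^{−2}·X is positive semidefinite. -/
open scoped Matrix

/-- Let `X` be an `n × n` real symmetric positive semidefinite matrix,
`ε > 0`, `C > 0`, and `0 < α ≤ ε² / (2C)`. Then `X - 2αC • (X² + εI)⁻² * X` is
positive semidefinite. -/
theorem gradient_step_psd_singular_value_relaxation
    (n : ℕ) (X : Matrix (Fin n) (Fin n) ℝ) (hX : X.PosSemidef)
    (ε C α : ℝ) (hε : 0 < ε) (hC : 0 < C) (hα : 0 < α) (hαle : α ≤ ε ^ 2 / (2 * C)) :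
    (X - (2 * α * C) • (((X ^ 2 + ε • (1 : Matrix (Fin n) (Fin n) ℝ))⁻¹) ^ 2 * X)).PosSemidef := by
  set B : Matrix (Fin n) (Fin n) ℝ := X ^ 2 + ε • (1 : Matrix (Fin n) (Fin n) ℝ) with hBdef
  set c : ℝ := 2 * α * C with hc
  have hcpos : 0 < c := by positivity
  have hcle : c ≤ ε ^ 2 := by
    have := (le_div_iff₀ (by positivity : (0:ℝ) < 2 * C)).mp hαle
    rw [hc]; nlinarith
  -- B is positive definite, hence invertible
  have hB : B.PosDef := by
    have h1 : (ε • (1 : Matrix (Fin n) (Fin n) ℝ)).PosDef := by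
      rw [Matrix.smul_one_eq_diagonal]
      exact Matrix.posDef_diagonal_iff.mpr fun _ => hε
    exact Matrix.PosDef.posSemidef_add (hX.pow 2) h1
  have := hB.isUnit.invertible
  have hBinv : B⁻¹ * B = 1 := Matrix.inv_mul_of_invertible B
  have hBinv' : B * B⁻¹ = 1 := Matrix.mul_inv_of_invertible B
  have hBinvherm : B⁻¹.IsHermitian := hB.isHermitian.inv
  have hBinvT : (B⁻¹)ᵀ = B⁻¹ := by
    rw [← Matrix.conjTranspose_eq_transpose_of_trivial]; exact hBinvherm.eq
  have hXT : Xᵀ = X := by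
    rw [← Matrix.conjTranspose_eq_transpose_of_trivial]; exact hX.1.eq
  -- square root of X
  set S := (open MatrixOrder in CFC.sqrt X) with hSdef
  have hS : S.PosSemidef := open MatrixOrder in Matrix.nonneg_iff_posSemidef.mp (CFC.sqrt_nonneg X)
  have hSS : S * S = X := open MatrixOrder in CFC.sqrt_mul_sqrt_self X hX.nonneg
  -- commutation facts
  have commSX : S * X = X * S := by rw [← hSS]; noncomm_ring
  have commSB : S * B = B * S := by
    rw [hBdef]
    simp only [Matrix.mul_add, Matrix.add_mul, Matrix.mul_smul, Matrix.smul_mul,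
      Matrix.mul_one, Matrix.one_mul, pow_two]
    rw [← Matrix.mul_assoc, commSX, Matrix.mul_assoc, commSX, ← Matrix.mul_assoc]
  have commSBinv : S * B⁻¹ = B⁻¹ * S := by
    calc S * B⁻¹ = B⁻¹ * (B * S) * B⁻¹ := by
          rw [← Matrix.mul_assoc B⁻¹ B S, hBinv, Matrix.one_mul]
      _ = B⁻¹ * (S * B) * B⁻¹ := by rw [commSB]
      _ = B⁻¹ * S := by
          rw [← Matrix.mul_assoc B⁻¹ S B, Matrix.mul_assoc _ B B⁻¹, hBinv', Matrix.mul_one]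
  -- The middle matrix N = 1 - c • (B⁻¹)²
  set N : Matrix (Fin n) (Fin n) ℝ := 1 - c • (B⁻¹ ^ 2) with hNdef
  have hNherm : N.IsHermitian := by
    simp only [Matrix.IsHermitian, hNdef, Matrix.conjTranspose_sub, Matrix.conjTranspose_smul,
      Matrix.conjTranspose_one, star_trivial, (hBinvherm.pow 2).eq]
  -- N is positive semidefinite
  have hN : N.PosSemidef := by
    refine Matrix.PosSemidef.of_dotProduct_mulVec_nonneg hNherm fun v => ?_
    set u : Fin n → ℝ := B⁻¹ *ᵥ v with hu
    have hv : B *ᵥ u = v := by rw [hu, Matrix.mulVec_mulVec, hBinv', Matrix.one_mulVec]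
    have hvAv : v ⬝ᵥ ((B⁻¹ ^ 2) *ᵥ v) = u ⬝ᵥ u := by
      rw [pow_two, ← Matrix.mulVec_mulVec, Matrix.dotProduct_mulVec, ← Matrix.mulVec_transpose,
        hBinvT, ← hu]
    have huu : 0 ≤ u ⬝ᵥ u := Finset.sum_nonneg fun i _ => mul_self_nonneg _
    -- key inequality : ε² (u⬝u) ≤ v⬝v
    have key : ε ^ 2 * (u ⬝ᵥ u) ≤ v ⬝ᵥ v := by
      have hvexp : v = X ^ 2 *ᵥ u + ε • u := by
        rw [← hv, hBdef, Matrix.add_mulVec, Matrix.smul_mulVec, Matrix.one_mulVec]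
      set y : Fin n → ℝ := X *ᵥ u with hy
      set z : Fin n → ℝ := X ^ 2 *ᵥ u with hz
      have hzy : z = X *ᵥ y := by rw [hz, hy, pow_two, ← Matrix.mulVec_mulVec]
      have huz : u ⬝ᵥ z = y ⬝ᵥ y := by
        rw [hzy, Matrix.dotProduct_mulVec, ← Matrix.mulVec_transpose, hXT, ← hy]
      have hzu : z ⬝ᵥ u = y ⬝ᵥ y := by rw [dotProduct_comm, huz]
      have hyy : 0 ≤ y ⬝ᵥ y := Finset.sum_nonneg fun i _ => mul_self_nonneg _
      have hzz : 0 ≤ z ⬝ᵥ z := Finset.sum_nonneg fun i _ => mul_self_nonneg _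
      have hexp : v ⬝ᵥ v = z ⬝ᵥ z + ε * (z ⬝ᵥ u) + ε * (u ⬝ᵥ z) + ε ^ 2 * (u ⬝ᵥ u) := by
        rw [hvexp, add_dotProduct, dotProduct_add, dotProduct_add,
          smul_dotProduct, dotProduct_smul, dotProduct_smul]
        simp only [smul_dotProduct, dotProduct_smul, smul_eq_mul]
        ring
      rw [hexp, hzu, huz]
      nlinarith
    have : star v ⬝ᵥ (N *ᵥ v) = v ⬝ᵥ v - c * (u ⬝ᵥ u) := by
      rw [star_trivial, hNdef, Matrix.sub_mulVec, Matrix.one_mulVec,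
        Matrix.smul_mulVec, dotProduct_sub, dotProduct_smul,
        smul_eq_mul, hvAv]
    rw [this]
    nlinarith
  -- rewrite the goal matrix as Sᴴ * N * S
  have hEq : X - c • ((B⁻¹ ^ 2) * X) = Sᴴ * N * S := by
    rw [hS.1.eq, hNdef]
    have hSA : S * (B⁻¹ ^ 2) = (B⁻¹ ^ 2) * S := by
      rw [pow_two, ← Matrix.mul_assoc, commSBinv, Matrix.mul_assoc, commSBinv,
        ← Matrix.mul_assoc]
    rw [Matrix.mul_sub, Matrix.mul_one, Matrix.mul_smul, hSA, Matrix.sub_mul,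
      Matrix.smul_mul, hSS, Matrix.mul_assoc, hSS]
  rw [hEq]
  exact hN.conjTranspose_mul_mul_same S
end

section
/- Let X be an n×n real symmetric positive semidefinite matrix, let ε > 0 and let p be a real number. Then every diagonal entry of the matrix X·(X² + εI)^{(p−2)/2} is nonnegative. -/
open Matrix

section Aux

variable {n : ℕ} {A : Matrix (Fin n) (Fin n) ℝ} (hA : A.IsHermitian)

lemma aux_star_mul_self :
    star (hA.eigenvectorUnitary : Matrix (Fin n) (Fin n) ℝ) *
      (hA.eigenvectorUnitary : Matrix (Fin n) (Fin n) ℝ) = 1 :=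
  (Matrix.mem_unitaryGroup_iff'.mp hA.eigenvectorUnitary.2)

lemma aux_mul_star_self :
    (hA.eigenvectorUnitary : Matrix (Fin n) (Fin n) ℝ) *
      star (hA.eigenvectorUnitary : Matrix (Fin n) (Fin n) ℝ) = 1 :=
  (Matrix.mem_unitaryGroup_iff.mp hA.eigenvectorUnitary.2)

/-- A matrix commuting with `A` commutes with any `rpow` of `A`. -/
lemma aux_commute_rpow {X : Matrix (Fin n) (Fin n) ℝ} (h : X * A = A * X) (r : ℝ) :
    X * hA.rpow r = hA.rpow r * X := by
  set U : Matrix (Fin n) (Fin n) ℝ := (hA.eigenvectorUnitary : Matrix (Fin n) (Fin n) ℝ) with hU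
  set Y : Matrix (Fin n) (Fin n) ℝ := star U * X * U with hY
  have hXUY : X = U * Y * star U := by
    rw [hY]
    rw [show U * (star U * X * U) * star U = (U * star U) * X * (U * star U) by
      simp only [Matrix.mul_assoc]]
    rw [aux_mul_star_self hA, Matrix.one_mul, Matrix.mul_one]
  have hspec : A = U * Matrix.diagonal (fun i => hA.eigenvalues i) * star U := by
    have := hA.spectral_theorem
    simpa using this
  have hYD : Y * Matrix.diagonal (fun i => hA.eigenvalues i)
      = Matrix.diagonal (fun i => hA.eigenvalues i) * Y := by
    have h2 : star U * (X * A) * U = star U * (A * X) * U := by rw [h]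
    rw [hspec] at h2
    have e1 : star U * (X * (U * Matrix.diagonal (fun i => hA.eigenvalues i) * star U)) * U
        = Y * Matrix.diagonal (fun i => hA.eigenvalues i) := by
      rw [hY]
      simp only [Matrix.mul_assoc]
      rw [aux_star_mul_self hA]
      simp [Matrix.mul_assoc]
    have e2 : star U * ((U * Matrix.diagonal (fun i => hA.eigenvalues i) * star U) * X) * U
        = Matrix.diagonal (fun i => hA.eigenvalues i) * Y := by
      rw [hY]
      simp only [Matrix.mul_assoc]
      rw [← Matrix.mul_assoc (star U) U, aux_star_mul_self hA, Matrix.one_mul]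
    rw [e1, e2] at h2
    exact h2
  have hYDr : Y * Matrix.diagonal (fun i => hA.eigenvalues i ^ r)
      = Matrix.diagonal (fun i => hA.eigenvalues i ^ r) * Y := by
    ext j k
    have hjk := congrFun (congrFun hYD j) k
    simp only [Matrix.mul_diagonal, Matrix.diagonal_mul] at hjk ⊢
    by_cases hd : hA.eigenvalues j = hA.eigenvalues k
    · rw [hd, mul_comm]
    · have hY0 : Y j k = 0 := by
        by_contra h0
        exact hd (mul_left_cancel₀ h0 (by linarith [hjk] )).symm
      simp [hY0]
  calc X * hA.rpow r
      = U * Y * star U * (U * Matrix.diagonal (fun i => hA.eigenvalues i ^ r) * star U) := by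
        rw [← hXUY]; rfl
    _ = U * (Y * Matrix.diagonal (fun i => hA.eigenvalues i ^ r)) * star U := by
        simp only [Matrix.mul_assoc]
        rw [← Matrix.mul_assoc (star U) U, aux_star_mul_self hA, Matrix.one_mul]
    _ = U * (Matrix.diagonal (fun i => hA.eigenvalues i ^ r) * Y) * star U := by rw [hYDr]
    _ = (U * Matrix.diagonal (fun i => hA.eigenvalues i ^ r) * star U) * (U * Y * star U) := by
        simp only [Matrix.mul_assoc]
        rw [← Matrix.mul_assoc (star U) U, aux_star_mul_self hA, Matrix.one_mul]
    _ = hA.rpow r * X := by rw [← hXUY]; rfl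

lemma aux_rpow_mul_rpow (hpos : ∀ i, 0 < hA.eigenvalues i) (r s : ℝ) :
    hA.rpow r * hA.rpow s = hA.rpow (r + s) := by
  unfold Matrix.IsHermitian.rpow
  simp only [Matrix.mul_assoc]
  rw [← Matrix.mul_assoc (star _) _ , aux_star_mul_self hA, Matrix.one_mul,
    ← Matrix.mul_assoc (Matrix.diagonal _), Matrix.diagonal_mul_diagonal]
  have : (fun i => hA.eigenvalues i ^ r * hA.eigenvalues i ^ s)
      = fun i => hA.eigenvalues i ^ (r + s) :=
    funext fun i => (Real.rpow_add (hpos i) r s).symm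
  rw [this]

lemma aux_rpow_isHermitian (r : ℝ) : (hA.rpow r).IsHermitian := by
  unfold Matrix.IsHermitian.rpow
  rw [Matrix.IsHermitian, ← Matrix.star_eq_conjTranspose, StarMul.star_mul, StarMul.star_mul, star_star]
  have : star (Matrix.diagonal (fun i => hA.eigenvalues i ^ r))
      = Matrix.diagonal (fun i => hA.eigenvalues i ^ r) := by
    rw [Matrix.star_eq_conjTranspose, Matrix.diagonal_conjTranspose]
    simp
  rw [this, Matrix.mul_assoc]

end Aux

/-- Let `X` be an `n × n` real symmetric positive semidefinite matrix,
`ε > 0` and `p : ℝ`. Then every diagonal entry of `X * (X² + εI)^((p-2)/2)` is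
nonnegative. -/
theorem diag_nonneg_mul_rpow
    (n : ℕ) (X : Matrix (Fin n) (Fin n) ℝ) (hX : X.PosSemidef)
    (ε : ℝ) (hε : 0 < ε) (p : ℝ) :
    ∀ i, 0 ≤ (X * (isHermitian_sq_add_smul_one hX.1 ε).rpow ((p - 2) / 2)) i i := by
  intro i
  set hA := isHermitian_sq_add_smul_one hX.1 ε
  set A := X ^ 2 + ε • (1 : Matrix (Fin n) (Fin n) ℝ) with hAdef
  -- A is positive definite
  have hApos : A.PosDef := by
    apply Matrix.PosDef.posSemidef_add (hX.pow 2)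
    refine Matrix.PosDef.of_dotProduct_mulVec_pos ?_ ?_
    · rw [Matrix.IsHermitian]
      simp [Matrix.conjTranspose_smul]
    · intro x hx
      have : star x ⬝ᵥ (ε • (1 : Matrix (Fin n) (Fin n) ℝ)) *ᵥ x = ε * (star x ⬝ᵥ x) := by
        simp [Matrix.smul_mulVec, dotProduct_smul]
      rw [this]
      exact mul_pos hε (Matrix.dotProduct_star_self_pos_iff.mpr hx)
  have hpos : ∀ j, 0 < hA.eigenvalues j := fun j => hApos.eigenvalues_pos j
  -- commutation
  have hcomm : X * A = A * X := by
    rw [hAdef]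
    simp only [Matrix.mul_add, Matrix.add_mul, Matrix.mul_smul, Matrix.smul_mul,
      Matrix.mul_one, Matrix.one_mul]
    rw [pow_succ, pow_succ, pow_zero, Matrix.one_mul, Matrix.mul_assoc]
  set r := (p - 2) / 2 with hr
  set C := hA.rpow (r / 2) with hC
  have hCC : C * C = hA.rpow r := by
    rw [hC, aux_rpow_mul_rpow hA hpos]
    norm_num
  have hXC : X * C = C * X := aux_commute_rpow hA hcomm (r / 2)
  have key : X * hA.rpow r = C * X * Cᴴ := by
    rw [(aux_rpow_isHermitian hA (r/2)).eq, ← hCC, ← Matrix.mul_assoc, hXC]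
  rw [key]
  have hpsd : (C * X * Cᴴ).PosSemidef := hX.mul_mul_conjTranspose_same C
  have := hpsd.dotProduct_mulVec_nonneg (Pi.single i 1)
  simpa [dotProduct, Matrix.mulVec, Pi.single_apply, Finset.mul_sum] using this
end

section
/- Let ε > 0 and q ∈ [0,1], and consider the function Φ(X) = (1+ε^q)·tr(Xᵀ(XXᵀ + εI)^{−1}X) on n×n real matrices. Then Φ is differentiable, and at every symmetric matrix X its gradient (the matrix G such that the Fréchet derivative of Φ at X in direction H is tr(GᵀH) for all H) equals 2ε(1+ε^q)·(XXᵀ + εI)^{−2}·X. -/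
open Matrix

attribute [local instance] Matrix.normedAddCommGroup Matrix.normedSpace

namespace SVR
variable {n : ℕ}

abbrev Mat (n : ℕ) := Matrix (Fin n) (Fin n) ℝ

noncomputable def mulCLM (n : ℕ) : Mat n →L[ℝ] Mat n →L[ℝ] Mat n :=
  LinearMap.toContinuousLinearMap <|
    (LinearMap.toContinuousLinearMap :
        (Mat n →ₗ[ℝ] Mat n) ≃ₗ[ℝ] (Mat n →L[ℝ] Mat n)).toLinearMap ∘ₗ
      LinearMap.mul ℝ (Mat n)

@[simp] lemma mulCLM_apply (A B : Mat n) : mulCLM n A B = A * B := rfl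

noncomputable def transposeCLM (n : ℕ) : Mat n →L[ℝ] Mat n :=
  LinearMap.toContinuousLinearMap (Matrix.transposeLinearEquiv (Fin n) (Fin n) ℝ ℝ).toLinearMap

@[simp] lemma transposeCLM_apply (A : Mat n) : transposeCLM n A = Aᵀ := rfl

noncomputable def traceCLM (n : ℕ) : Mat n →L[ℝ] ℝ :=
  LinearMap.toContinuousLinearMap (Matrix.traceLinearMap (Fin n) ℝ ℝ)

@[simp] lemma traceCLM_apply (A : Mat n) : traceCLM n A = A.trace := rfl

lemma hasFDerivAt_matmul {f g : Mat n → Mat n} {f' g' : Mat n →L[ℝ] Mat n} {x : Mat n}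
    (hf : HasFDerivAt f f' x) (hg : HasFDerivAt g g' x) :
    HasFDerivAt (fun y => f y * g y)
      ((mulCLM n).precompR (Mat n) (f x) g' + (mulCLM n).precompL (Mat n) f' (g x)) x :=
  (mulCLM n).hasFDerivAt_of_bilinear hf hg

@[simp] lemma precompR_eval (a : Mat n) (g' : Mat n →L[ℝ] Mat n) (H : Mat n) :
    ((mulCLM n).precompR (Mat n) a g') H = a * g' H := rfl

@[simp] lemma precompL_eval (f' : Mat n →L[ℝ] Mat n) (b : Mat n) (H : Mat n) :
    ((mulCLM n).precompL (Mat n) f' b) H = f' H * b := rfl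

lemma diff_det {E : Type*} [NormedAddCommGroup E] [NormedSpace ℝ E]
    {f : E → Mat n} (h : ∀ i j, Differentiable ℝ fun x => f x i j) :
    Differentiable ℝ fun x => (f x).det := by
  simp only [Matrix.det_apply']
  refine Differentiable.fun_sum fun σ _ => Differentiable.const_mul ?_ _
  exact fun x =>
    (HasFDerivAt.finset_prod (fun i _ => ((h (σ i) i) x).hasFDerivAt)).differentiableAt

lemma diff_adjugate {E : Type*} [NormedAddCommGroup E] [NormedSpace ℝ E]
    {f : E → Mat n} (h : ∀ i j, Differentiable ℝ fun x => f x i j) (i j : Fin n) :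
    Differentiable ℝ fun x => (f x).adjugate i j := by
  simp only [Matrix.adjugate_apply]
  apply diff_det
  intro k l
  simp only [Matrix.updateRow_apply]
  by_cases hk : k = j <;> simp [hk, h]

lemma diff_inv {E : Type*} [NormedAddCommGroup E] [NormedSpace ℝ E]
    {f : E → Mat n} (h : ∀ i j, Differentiable ℝ fun x => f x i j)
    (hdet : ∀ x, (f x).det ≠ 0) :
    Differentiable ℝ fun x => (f x)⁻¹ := by
  refine differentiable_pi.2 fun i => differentiable_pi.2 fun j => ?_
  have : (fun x => (f x)⁻¹ i j) = fun x => ((f x).det)⁻¹ * (f x).adjugate i j := by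
    funext x
    rw [Matrix.inv_def, Matrix.smul_apply, Ring.inverse_eq_inv, smul_eq_mul]
  rw [this]
  exact ((diff_det h).inv hdet).mul (diff_adjugate h i j)

end SVR

open SVR in
/-- Let `ε > 0`, `q ∈ [0,1]` and
`Φ(X) = (1+ε^q)·tr(Xᵀ(XXᵀ + εI)⁻¹X)` on `n × n` real matrices. Then `Φ` is differentiable,
and at every symmetric `X` its gradient with respect to the Frobenius inner product
`tr(GᵀH)` equals `2ε(1+ε^q)·(XXᵀ + εI)⁻²·X`. -/
theorem gradient_singular_value_relaxation
    (n : ℕ) (ε q : ℝ) (hε : 0 < ε) (hq0 : 0 ≤ q) (hq1 : q ≤ 1) :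
    Differentiable ℝ (fun X : Matrix (Fin n) (Fin n) ℝ =>
        (1 + ε ^ q) * (Xᵀ * (X * Xᵀ + ε • (1 : Matrix (Fin n) (Fin n) ℝ))⁻¹ * X).trace) ∧
      ∀ X : Matrix (Fin n) (Fin n) ℝ, X.IsSymm →
        ∀ H : Matrix (Fin n) (Fin n) ℝ,
          fderiv ℝ (fun X : Matrix (Fin n) (Fin n) ℝ =>
              (1 + ε ^ q) * (Xᵀ * (X * Xᵀ + ε • (1 : Matrix (Fin n) (Fin n) ℝ))⁻¹ * X).trace)
            X H =
          ((((2 * ε * (1 + ε ^ q)) •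
              (((X * Xᵀ + ε • (1 : Matrix (Fin n) (Fin n) ℝ))⁻¹ ^ 2) * X))ᵀ) * H).trace := by
  classical
  set c : ℝ := 1 + ε ^ q with hc
  set A : Mat n → Mat n := fun X => X * Xᵀ + ε • 1 with hA
  set g : Mat n → Mat n := fun X => (A X)⁻¹ with hg
  -- positive definiteness and invertibility
  have hApd : ∀ X, (A X).PosDef := by
    intro X
    have h1 : (X * Xᵀ).PosSemidef := by
      simpa using Matrix.posSemidef_self_mul_conjTranspose X
    have h2 : (ε • (1 : Mat n)).PosDef := by
      rw [Matrix.smul_one_eq_diagonal]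
      exact Matrix.posDef_diagonal_iff.2 fun _ => hε
    exact Matrix.PosDef.posSemidef_add h1 h2
  have hdet : ∀ X, (A X).det ≠ 0 := fun X => (hApd X).det_pos.ne'
  have hunit : ∀ X, IsUnit (A X).det := fun X => (hdet X).isUnit
  -- derivative of A
  have hAfd : ∀ X : Mat n, HasFDerivAt A
      ((mulCLM n).precompR (Mat n) X (transposeCLM n) +
        (mulCLM n).precompL (Mat n) (ContinuousLinearMap.id ℝ (Mat n)) Xᵀ) X := by
    intro X
    have h := (hasFDerivAt_matmul (f := fun Y : Mat n => Y) (g := fun Y : Mat n => Yᵀ)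
      (hasFDerivAt_id X) ((transposeCLM n).hasFDerivAt)).add_const (ε • (1 : Mat n))
    exact h
  -- differentiability of g
  have hgdiff : Differentiable ℝ g := by
    refine diff_inv ?_ hdet
    intro i j
    have hAd : Differentiable ℝ A := fun X => (hAfd X).differentiableAt
    exact (differentiable_pi.1 ((differentiable_pi.1 hAd) i)) j
  -- derivative of Φ
  have hΦ : ∀ X : Mat n, HasFDerivAt
      (fun X : Mat n => c * (Xᵀ * (A X)⁻¹ * X).trace)
      (c • ((traceCLM n).comp
        ((mulCLM n).precompR (Mat n) (Xᵀ * g X) (ContinuousLinearMap.id ℝ (Mat n)) +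
          (mulCLM n).precompL (Mat n)
            ((mulCLM n).precompR (Mat n) Xᵀ (fderiv ℝ g X) +
              (mulCLM n).precompL (Mat n) (transposeCLM n) (g X)) X))) X := by
    intro X
    have h1 := hasFDerivAt_matmul (f := fun Y : Mat n => Yᵀ) (g := g)
      ((transposeCLM n).hasFDerivAt) (hgdiff X).hasFDerivAt
    have h2 := hasFDerivAt_matmul (f := fun Y : Mat n => Yᵀ * g Y) (g := fun Y : Mat n => Y)
      h1 (hasFDerivAt_id X)
    have h3 := HasFDerivAt.comp (f := fun Y : Mat n => Yᵀ * g Y * Y) X ((traceCLM n).hasFDerivAt) h2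
    have h4 := h3.const_mul c
    exact h4
  constructor
  · exact fun X => (hΦ X).differentiableAt
  · intro X hX H
    refine (congrArg (fun L => L H) (hΦ X).fderiv).trans ?_
    change c * (Xᵀ * g X * H + (Xᵀ * (fderiv ℝ g X) H + Hᵀ * g X) * X).trace = _
    have hXe : Xᵀ = X := hX
    have hABu : A X * g X = 1 := Matrix.mul_nonsing_inv _ (hunit X)
    have hBAu : g X * A X = 1 := Matrix.nonsing_inv_mul _ (hunit X)
    have hAt : (A X)ᵀ = A X := by
      simp [hA, Matrix.transpose_add, Matrix.transpose_mul, Matrix.transpose_smul]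
    have hBt : (g X)ᵀ = g X := by
      show ((A X)⁻¹)ᵀ = (A X)⁻¹
      rw [Matrix.transpose_nonsing_inv, hAt]
    have hG : ∀ K : Matrix (Fin n) (Fin n) ℝ,
        (fderiv ℝ g X) K = -(g X * ((X * Kᵀ + K * X) * g X)) := by
      have hone : (fun Y => A Y * g Y) = fun _ : Mat n => (1 : Mat n) :=
        funext fun Y => Matrix.mul_nonsing_inv _ (hunit Y)
      have hprod := hasFDerivAt_matmul (f := A) (g := g) (hAfd X) (hgdiff X).hasFDerivAt
      rw [hone] at hprod
      have hz := hprod.unique (hasFDerivAt_const 1 X)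
      intro K
      have hzK := congrArg (fun L : Mat n →L[ℝ] Mat n => L K) hz
      change A X * (fderiv ℝ g X) K + (X * Kᵀ + K * Xᵀ) * g X = 0 at hzK
      have h5 : A X * (fderiv ℝ g X) K = -((X * Kᵀ + K * Xᵀ) * g X) :=
        eq_neg_of_add_eq_zero_left hzK
      calc (fderiv ℝ g X) K = 1 * (fderiv ℝ g X) K := (one_mul _).symm
        _ = g X * A X * (fderiv ℝ g X) K := by rw [hBAu]
        _ = g X * (A X * (fderiv ℝ g X) K) := by rw [mul_assoc]
        _ = g X * -((X * Kᵀ + K * X) * g X) := by rw [h5, hXe]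
        _ = -(g X * ((X * Kᵀ + K * X) * g X)) := by rw [mul_neg]
    rw [hXe, hG H]
    set B : Matrix (Fin n) (Fin n) ℝ := g X with hB
    simp only [Matrix.mul_neg, Matrix.neg_mul, Matrix.add_mul, Matrix.mul_add,
      Matrix.trace_add, Matrix.trace_neg, mul_assoc]
    have hBx : (X * X + ε • (1 : Matrix (Fin n) (Fin n) ℝ))⁻¹ = B := by
      simp only [hB, hg, hA, hXe]
    -- key algebraic identity
    have h1 : X * (X * B) + ε • B = 1 := by
      have h := hABu
      simp only [hA] at h
      rw [hXe, Matrix.add_mul, Matrix.smul_mul, one_mul, mul_assoc] at h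
      exact h
    have h2 : X * (X * B) = 1 - ε • B := eq_sub_of_add_eq h1
    have hkey : X * B - X * (B * (X * (X * B))) = ε • (X * (B * B)) := by
      have e : X * (B * (X * (X * B))) = (X * B) * (X * (X * B)) := by rw [← mul_assoc]
      rw [e, h2, Matrix.mul_sub, mul_one, Matrix.mul_smul, sub_sub_cancel, mul_assoc]
    -- trace identities
    have hT2 : (Hᵀ * (B * X)).trace = (X * (B * H)).trace := by
      rw [← Matrix.trace_transpose (Hᵀ * (B * X))]
      simp [Matrix.transpose_mul, hXe, hBt, mul_assoc]
    have hw2 : (X * (B * (H * (X * (B * X))))).trace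
        = (X * (B * (X * (X * (B * H))))).trace := by
      calc (X * (B * (H * (X * (B * X))))).trace
          = ((B * (H * (X * (B * X)))) * X).trace := Matrix.trace_mul_comm _ _
        _ = (B * (H * (X * (B * (X * X))))).trace := by simp [mul_assoc]
        _ = ((H * (X * (B * (X * X)))) * B).trace := Matrix.trace_mul_comm _ _
        _ = (H * (X * (B * (X * (X * B))))).trace := by simp [mul_assoc]
        _ = ((X * (B * (X * (X * B)))) * H).trace := Matrix.trace_mul_comm _ _
        _ = (X * (B * (X * (X * (B * H))))).trace := by simp [mul_assoc]
    have hw1 : (X * (B * (X * (Hᵀ * (B * X))))).trace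
        = (X * (B * (X * (X * (B * H))))).trace := by
      rw [← Matrix.trace_transpose (X * (B * (X * (Hᵀ * (B * X)))))]
      simp only [Matrix.transpose_mul, Matrix.transpose_transpose, hXe, hBt, mul_assoc]
      exact hw2
    have hsub : (X * (B * H)).trace - (X * (B * (X * (X * (B * H))))).trace
        = ε * (X * (B * (B * H))).trace := by
      have e1 : X * (B * H) = (X * B) * H := (mul_assoc _ _ _).symm
      have e2 : X * (B * (X * (X * (B * H)))) = (X * (B * (X * (X * B)))) * H := by
        simp [mul_assoc]
      rw [e2, e1, ← Matrix.trace_sub, ← Matrix.sub_mul, hkey, Matrix.smul_mul,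
        Matrix.trace_smul, smul_eq_mul]
      congr 2
      simp [mul_assoc]
    have hR : ((((2 * (ε * c)) • ((X * X + ε • (1 : Matrix (Fin n) (Fin n) ℝ))⁻¹ ^ 2 * X))ᵀ) * H).trace
        = 2 * (ε * c) * (X * (B * (B * H))).trace := by
      rw [hBx, sq, Matrix.transpose_smul, Matrix.smul_mul, Matrix.trace_smul, smul_eq_mul]
      congr 2
      simp [Matrix.transpose_mul, hXe, hBt, mul_assoc]
    rw [hT2, hw1, hw2, hR]
    ring_nf
    linear_combination (2 * c) * hsub
end
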